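/- Let φ: L' → L be a morphism of (K, A)-Lie-Rinehart algebras where both L' and L are free A-modules. Then the PBW isomorphisms ψ_{L'}: gr U(A, L') → Sym_A(L') and ψ_L: gr U(A, L) → Sym_A(L) are compatible with the induced maps: Sym(φ) ∘ ψ_{L'} = ψ_L ∘ gr(U(φ)), i.e. the square formed by gr(U(φ)), Sym(φ), ψ_{L'}, ψ_L commutes. -/

import Mathlib

universe u

/-- A `(K, A)`-Lie-Rinehart algebra structure on an `A`-module `L`. -/
structure LieRinehart (K A L : Type u) [CommRing K] [CommRing A] [Algebra K A]
    [AddCommGroup L] [Module A L] where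
  bracket : L → L → L
  anchor : L →ₗ[A] Derivation K A A
  bracket_add_left : ∀ x y z : L, bracket (x + y) z = bracket x z + bracket y z
  bracket_add_right : ∀ x y z : L, bracket x (y + z) = bracket x y + bracket x z
  bracket_skew : ∀ x y : L, bracket x y = - bracket y x
  bracket_jacobi : ∀ x y z : L,
    bracket x (bracket y z) = bracket (bracket x y) z + bracket y (bracket x z)
  bracket_leibniz : ∀ (x : L) (a : A) (y : L),
    bracket x (a • y) = a • bracket x y + anchor x a • y
  anchor_bracket : ∀ (x y : L) (a : A),
    anchor (bracket x y) a = anchor x (anchor y a) - anchor y (anchor x a)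

/-- A morphism of `(K, A)`-Lie-Rinehart algebras. -/
structure LieRinehartHom {K A L L' : Type u} [CommRing K] [CommRing A] [Algebra K A]
    [AddCommGroup L] [Module A L] [AddCommGroup L'] [Module A L']
    (𝓛 : LieRinehart K A L) (𝓛' : LieRinehart K A L') where
  toFun : L →ₗ[A] L'
  map_bracket : ∀ x y, toFun (𝓛.bracket x y) = 𝓛'.bracket (toFun x) (toFun y)
  map_anchor : ∀ x, 𝓛'.anchor (toFun x) = 𝓛.anchor x

/-- An enveloping algebra of a Lie-Rinehart algebra: an associative unital `K`-algebra
generated by `A` and (the image of) `L`, subject to the Rinehart relations. -/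
structure EnvAlg (K A L : Type u) [CommRing K] [CommRing A] [Algebra K A]
    [AddCommGroup L] [Module A L] (𝓛 : LieRinehart K A L) where
  U : Type u
  [ring : Ring U]
  [algebra : Algebra K U]
  ιA : A →ₐ[K] U
  ιL : L →+ U
  ιL_smul : ∀ (f : A) (D : L), ιL (f • D) = ιA f * ιL D
  comm_rel : ∀ D D', ιL D * ιL D' - ιL D' * ιL D = ιL (𝓛.bracket D D')
  anchor_rel : ∀ (D : L) (f : A), ιL D * ιA f - ιA f * ιL D = ιA (𝓛.anchor D f)
  gen : ∀ S : Subalgebra K U, (∀ f, ιA f ∈ S) → (∀ D, ιL D ∈ S) → ∀ u, u ∈ S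

attribute [instance] EnvAlg.ring EnvAlg.algebra

/-- The canonical filtration `U_{(m)}(A, L)`, spanned by `A` and products of at most `m`
elements of `ι_L(L)`. -/
noncomputable def EnvAlg.filt {K A L : Type u} [CommRing K] [CommRing A] [Algebra K A]
    [AddCommGroup L] [Module A L] {𝓛 : LieRinehart K A L} (𝓤 : EnvAlg K A L 𝓛) (m : ℕ) :
    Submodule K 𝓤.U :=
  Submodule.span K {u | ∃ k ≤ m, ∃ (f : A) (Ds : Fin k → L),
    u = 𝓤.ιA f * (List.ofFn fun i => 𝓤.ιL (Ds i)).prod}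

/-- The symmetrized monomial `(1/k!) Σ_σ D̄_{σ(1)} ⋯ D̄_{σ(k)}` in an enveloping algebra. -/
noncomputable def symMon {K A L : Type u} [Field K] [CommRing A] [Algebra K A]
    [AddCommGroup L] [Module A L] {𝓛 : LieRinehart K A L} (𝓤 : EnvAlg K A L 𝓛)
    (k : ℕ) (D : Fin k → L) : 𝓤.U :=
  algebraMap K 𝓤.U ((k.factorial : K)⁻¹) *
    ∑ σ : Equiv.Perm (Fin k), (List.ofFn fun i => 𝓤.ιL (D (σ i))).prod

/-- the PBW isomorphisms are compatible with the maps induced by a morphism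
`φ : L' → L` of (free) Lie-Rinehart algebras: the square formed by `gr(U(φ))`, `Sym(φ)` and the
two PBW maps commutes.  Concretely: the induced map `U(φ)` is filtered (so induces `gr(U(φ))`),
and it carries the symmetrization of a tuple in `L'` to the symmetrization of its image tuple,
which is precisely `Sym(φ) ∘ ψ_{L'} = ψ_L ∘ gr(U(φ))` on associated graded pieces. -/
theorem pbw_natural
    (K A L' L ι ι' : Type u) [Field K] [CharZero K] [CommRing A] [Algebra K A]
    [AddCommGroup L'] [Module A L'] [AddCommGroup L] [Module A L]
    (𝓛' : LieRinehart K A L') (𝓛 : LieRinehart K A L) (φ : LieRinehartHom 𝓛' 𝓛)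
    (b' : Module.Basis ι' A L') (b : Module.Basis ι A L)
    (𝓤' : EnvAlg K A L' 𝓛') (𝓤 : EnvAlg K A L 𝓛)
    (Φ : 𝓤'.U →ₐ[K] 𝓤.U)
    (hΦA : ∀ f : A, Φ (𝓤'.ιA f) = 𝓤.ιA f)
    (hΦL : ∀ D : L', Φ (𝓤'.ιL D) = 𝓤.ιL (φ.toFun D)) :
    (∀ (m : ℕ) (u : 𝓤'.U), u ∈ 𝓤'.filt m → Φ u ∈ 𝓤.filt m) ∧
    (∀ (k : ℕ) (D : Fin k → L'),
      Φ (symMon 𝓤' k D) = symMon 𝓤 k (fun i => φ.toFun (D i))) := by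
  constructor
  · intro m u hu
    refine Submodule.span_induction (p := fun u _ => Φ u ∈ 𝓤.filt m) ?_ ?_ ?_ ?_ hu
    · rintro x ⟨k, hk, f, Ds, rfl⟩
      apply Submodule.subset_span
      refine ⟨k, hk, f, fun i => φ.toFun (Ds i), ?_⟩
      rw [map_mul, hΦA, map_list_prod, List.map_ofFn]
      simp [Function.comp_def, hΦL]
    · simpa using (𝓤.filt m).zero_mem
    · intro x y _ _ hx hy
      rw [map_add]; exact (𝓤.filt m).add_mem hx hy
    · intro c x _ hx
      rw [map_smul]; exact (𝓤.filt m).smul_mem c hx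
  · intro k D
    unfold symMon
    rw [map_mul, AlgHom.commutes, map_sum]
    congr 1
    refine Finset.sum_congr rfl fun σ _ => ?_
    rw [map_list_prod, List.map_ofFn]
    simp [Function.comp_def, hΦL]
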